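/- Let n, m be nonzero real numbers. On the open set {u₁ ≠ u₂} ⊂ ℝ⁴ define a = p₁²/(n²(u₁−u₂)) + p₂²/(m²(u₂−u₁)) − u₁² − u₁u₂ − u₂² and b = u₂·p₁²/(n²(u₂−u₁)) + u₁·p₂²/(m²(u₁−u₂)) + (u₁+u₂)·u₁·u₂. Then {a, b} = 0 identically with respect to the canonical Poisson bracket; i.e. a and b are in involution, and (a,b) solves the rescaled separated relations (p₁/n)² = u₁³ + a·u₁ + b, (p₂/m)² = u₂³ + a·u₂ + b. -/

import Mathlib

/-- The canonical Poisson bracket on `ℝ⁴` with coordinates `(u₁,u₂,p₁,p₂)`. -/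
noncomputable def poissonBracket (f g : ℝ → ℝ → ℝ → ℝ → ℝ) (u₁ u₂ p₁ p₂ : ℝ) : ℝ :=
    deriv (fun x => f x u₂ p₁ p₂) u₁ * deriv (fun y => g u₁ u₂ y p₂) p₁
  + deriv (fun x => f u₁ x p₁ p₂) u₂ * deriv (fun y => g u₁ u₂ p₁ y) p₂
  - deriv (fun y => f u₁ u₂ y p₂) p₁ * deriv (fun x => g x u₂ p₁ p₂) u₁
  - deriv (fun y => f u₁ u₂ p₁ y) p₂ * deriv (fun x => g u₁ x p₁ p₂) u₂

set_option maxHeartbeats 2000000 in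
/-- For nonzero reals `n`, `m`, the rescaled integrals `a` and `b` are in
involution with respect to the canonical Poisson bracket on `{u₁ ≠ u₂}`, and
they solve the rescaled separated relations `(p₁/n)² = u₁³ + a·u₁ + b`,
`(p₂/m)² = u₂³ + a·u₂ + b`. -/
theorem rescaled_involution (n m : ℝ) (hn : n ≠ 0) (hm : m ≠ 0)
    (u₁ u₂ p₁ p₂ : ℝ) (h : u₁ ≠ u₂) :
    let aF : ℝ → ℝ → ℝ → ℝ → ℝ := fun x₁ x₂ y₁ y₂ =>
      y₁ ^ 2 / (n ^ 2 * (x₁ - x₂)) + y₂ ^ 2 / (m ^ 2 * (x₂ - x₁))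
        - x₁ ^ 2 - x₁ * x₂ - x₂ ^ 2
    let bF : ℝ → ℝ → ℝ → ℝ → ℝ := fun x₁ x₂ y₁ y₂ =>
      x₂ * y₁ ^ 2 / (n ^ 2 * (x₂ - x₁)) + x₁ * y₂ ^ 2 / (m ^ 2 * (x₁ - x₂))
        + (x₁ + x₂) * x₁ * x₂
    poissonBracket aF bF u₁ u₂ p₁ p₂ = 0 ∧
    (p₁ / n) ^ 2 = u₁ ^ 3 + aF u₁ u₂ p₁ p₂ * u₁ + bF u₁ u₂ p₁ p₂ ∧
    (p₂ / m) ^ 2 = u₂ ^ 3 + aF u₁ u₂ p₁ p₂ * u₂ + bF u₁ u₂ p₁ p₂ := by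
  intro aF bF
  have hsub : u₁ - u₂ ≠ 0 := sub_ne_zero.mpr h
  have hsub' : u₂ - u₁ ≠ 0 := sub_ne_zero.mpr (Ne.symm h)
  have hn2 : n ^ 2 ≠ 0 := pow_ne_zero 2 hn
  have hm2 : m ^ 2 ≠ 0 := pow_ne_zero 2 hm
  have hA1 : n ^ 2 * (u₁ - u₂) ≠ 0 := mul_ne_zero hn2 hsub
  have hA2 : n ^ 2 * (u₂ - u₁) ≠ 0 := mul_ne_zero hn2 hsub'
  have hB1 : m ^ 2 * (u₁ - u₂) ≠ 0 := mul_ne_zero hm2 hsub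
  have hB2 : m ^ 2 * (u₂ - u₁) ≠ 0 := mul_ne_zero hm2 hsub'
  -- D1 : ∂a/∂u₁
  have hD1 : HasDerivAt (fun x => p₁ ^ 2 / (n ^ 2 * (x - u₂)) + p₂ ^ 2 / (m ^ 2 * (u₂ - x))
        - x ^ 2 - x * u₂ - u₂ ^ 2)
      (-(p₁ ^ 2 * n ^ 2) / (n ^ 2 * (u₁ - u₂)) ^ 2 + p₂ ^ 2 * m ^ 2 / (m ^ 2 * (u₂ - u₁)) ^ 2
        - 2 * u₁ - u₂) u₁ := by
    have key := (((((hasDerivAt_const u₁ (p₁ ^ 2)).div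
        (((hasDerivAt_id u₁).sub_const u₂).const_mul (n ^ 2)) hA1).add
      ((hasDerivAt_const u₁ (p₂ ^ 2)).div
        (((hasDerivAt_id u₁).const_sub u₂).const_mul (m ^ 2)) hB2)).sub
      (hasDerivAt_pow 2 u₁)).sub ((hasDerivAt_id u₁).mul_const u₂)).sub_const (u₂ ^ 2)
    refine key.congr_deriv ?_
    simp only [id]
    field_simp
    ring
  -- D3 : ∂a/∂u₂
  have hD3 : HasDerivAt (fun x => p₁ ^ 2 / (n ^ 2 * (u₁ - x)) + p₂ ^ 2 / (m ^ 2 * (x - u₁))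
        - u₁ ^ 2 - u₁ * x - x ^ 2)
      (p₁ ^ 2 * n ^ 2 / (n ^ 2 * (u₁ - u₂)) ^ 2 - p₂ ^ 2 * m ^ 2 / (m ^ 2 * (u₂ - u₁)) ^ 2
        - u₁ - 2 * u₂) u₂ := by
    have key := (((((hasDerivAt_const u₂ (p₁ ^ 2)).div
        (((hasDerivAt_id u₂).const_sub u₁).const_mul (n ^ 2)) hA1).add
      ((hasDerivAt_const u₂ (p₂ ^ 2)).div
        (((hasDerivAt_id u₂).sub_const u₁).const_mul (m ^ 2)) hB2)).sub_const
      (u₁ ^ 2)).sub ((hasDerivAt_id u₂).const_mul u₁)).sub (hasDerivAt_pow 2 u₂)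
    refine key.congr_deriv ?_
    simp only [id]
    field_simp
    ring
  -- D5 : ∂a/∂p₁
  have hD5 : HasDerivAt (fun y => y ^ 2 / (n ^ 2 * (u₁ - u₂)) + p₂ ^ 2 / (m ^ 2 * (u₂ - u₁))
        - u₁ ^ 2 - u₁ * u₂ - u₂ ^ 2)
      (2 * p₁ / (n ^ 2 * (u₁ - u₂))) p₁ := by
    have key := (((((hasDerivAt_pow 2 p₁).div_const (n ^ 2 * (u₁ - u₂))).add_const
      (p₂ ^ 2 / (m ^ 2 * (u₂ - u₁)))).sub_const (u₁ ^ 2)).sub_const (u₁ * u₂)).sub_const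
      (u₂ ^ 2)
    refine key.congr_deriv ?_
    ring
  -- D7 : ∂a/∂p₂
  have hD7 : HasDerivAt (fun y => p₁ ^ 2 / (n ^ 2 * (u₁ - u₂)) + y ^ 2 / (m ^ 2 * (u₂ - u₁))
        - u₁ ^ 2 - u₁ * u₂ - u₂ ^ 2)
      (2 * p₂ / (m ^ 2 * (u₂ - u₁))) p₂ := by
    have key := (((((hasDerivAt_pow 2 p₂).div_const (m ^ 2 * (u₂ - u₁))).const_add
      (p₁ ^ 2 / (n ^ 2 * (u₁ - u₂)))).sub_const (u₁ ^ 2)).sub_const (u₁ * u₂)).sub_const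
      (u₂ ^ 2)
    refine key.congr_deriv ?_
    ring
  -- D6 : ∂b/∂u₁
  have hD6 : HasDerivAt (fun x => u₂ * p₁ ^ 2 / (n ^ 2 * (u₂ - x))
        + x * p₂ ^ 2 / (m ^ 2 * (x - u₂)) + (x + u₂) * x * u₂)
      (u₂ * p₁ ^ 2 * n ^ 2 / (n ^ 2 * (u₁ - u₂)) ^ 2
        - u₂ * p₂ ^ 2 * m ^ 2 / (m ^ 2 * (u₁ - u₂)) ^ 2 + 2 * u₁ * u₂ + u₂ ^ 2) u₁ := by
    have key := (((hasDerivAt_const u₁ (u₂ * p₁ ^ 2)).div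
        (((hasDerivAt_id u₁).const_sub u₂).const_mul (n ^ 2)) hA2).add
      (((hasDerivAt_id u₁).mul_const (p₂ ^ 2)).div
        (((hasDerivAt_id u₁).sub_const u₂).const_mul (m ^ 2)) hB1)).add
      ((((hasDerivAt_id u₁).add_const u₂).mul (hasDerivAt_id u₁)).mul_const u₂)
    refine key.congr_deriv ?_
    simp only [id]
    field_simp
    ring
  -- D8 : ∂b/∂u₂
  have hD8 : HasDerivAt (fun x => x * p₁ ^ 2 / (n ^ 2 * (x - u₁))
        + u₁ * p₂ ^ 2 / (m ^ 2 * (u₁ - x)) + (u₁ + x) * u₁ * x)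
      (-(u₁ * p₁ ^ 2 * n ^ 2) / (n ^ 2 * (u₁ - u₂)) ^ 2
        + u₁ * p₂ ^ 2 * m ^ 2 / (m ^ 2 * (u₁ - u₂)) ^ 2 + u₁ ^ 2 + 2 * u₁ * u₂) u₂ := by
    have key := ((((hasDerivAt_id u₂).mul_const (p₁ ^ 2)).div
        (((hasDerivAt_id u₂).sub_const u₁).const_mul (n ^ 2)) hA2).add
      ((hasDerivAt_const u₂ (u₁ * p₂ ^ 2)).div
        (((hasDerivAt_id u₂).const_sub u₁).const_mul (m ^ 2)) hB1)).add
      ((((hasDerivAt_id u₂).const_add u₁).mul_const u₁).mul (hasDerivAt_id u₂))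
    refine key.congr_deriv ?_
    simp only [id]
    field_simp
    ring
  -- D2 : ∂b/∂p₁
  have hD2 : HasDerivAt (fun y => u₂ * y ^ 2 / (n ^ 2 * (u₂ - u₁))
        + u₁ * p₂ ^ 2 / (m ^ 2 * (u₁ - u₂)) + (u₁ + u₂) * u₁ * u₂)
      (2 * u₂ * p₁ / (n ^ 2 * (u₂ - u₁))) p₁ := by
    have key := ((((hasDerivAt_pow 2 p₁).const_mul u₂).div_const
      (n ^ 2 * (u₂ - u₁))).add_const (u₁ * p₂ ^ 2 / (m ^ 2 * (u₁ - u₂)))).add_const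
      ((u₁ + u₂) * u₁ * u₂)
    refine key.congr_deriv ?_
    ring
  -- D4 : ∂b/∂p₂
  have hD4 : HasDerivAt (fun y => u₂ * p₁ ^ 2 / (n ^ 2 * (u₂ - u₁))
        + u₁ * y ^ 2 / (m ^ 2 * (u₁ - u₂)) + (u₁ + u₂) * u₁ * u₂)
      (2 * u₁ * p₂ / (m ^ 2 * (u₁ - u₂))) p₂ := by
    have key := ((((hasDerivAt_pow 2 p₂).const_mul u₁).div_const
      (m ^ 2 * (u₁ - u₂))).const_add (u₂ * p₁ ^ 2 / (n ^ 2 * (u₂ - u₁)))).add_const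
      ((u₁ + u₂) * u₁ * u₂)
    refine key.congr_deriv ?_
    ring
  refine ⟨?_, by simp only [aF, bF]; field_simp; ring, by simp only [aF, bF]; field_simp; ring⟩
  show deriv (fun x => aF x u₂ p₁ p₂) u₁ * deriv (fun y => bF u₁ u₂ y p₂) p₁
      + deriv (fun x => aF u₁ x p₁ p₂) u₂ * deriv (fun y => bF u₁ u₂ p₁ y) p₂
      - deriv (fun y => aF u₁ u₂ y p₂) p₁ * deriv (fun x => bF x u₂ p₁ p₂) u₁
      - deriv (fun y => aF u₁ u₂ p₁ y) p₂ * deriv (fun x => bF u₁ x p₁ p₂) u₂ = 0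
  simp only [aF, bF]
  rw [hD1.deriv, hD2.deriv, hD3.deriv, hD4.deriv, hD5.deriv, hD6.deriv, hD7.deriv, hD8.deriv]
  field_simp
  ring
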